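/- Let N ≥ 3 and let b, p, c_f, c_l be reals with 0 < c_l < c_f < b and p > 0. Let h'(q) = N(b+p)[(1−q)^(N−1) − q(N−1)(1−q)^(N−2)] − N·c_l + N(c_l − c_f)(1−q)^(N−1). Then h'(1) = −N·c_l < 0 and h'(0) = N(b + p − c_f) > 0, and h' has exactly one root in (0,1). -/

import Mathlib

open Set in
private lemma G_unique_root (m : ℕ) (C D c_l : ℝ) (hC : 0 < C) (hD : 0 < D)
    (hcl : 0 < c_l) (hA : c_l < C - D) :
    ∃! q : ℝ, q ∈ Set.Ioo (0 : ℝ) 1 ∧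
      C * (1 - q) ^ (m + 2) - D * (1 - q) ^ (m + 1) = c_l := by
  set G : ℝ → ℝ := fun q => C * (1 - q) ^ (m + 2) - D * (1 - q) ^ (m + 1) with hGdef
  have hm2 : (0:ℝ) < (m:ℝ) + 2 := by positivity
  set t₀ : ℝ := D * (m + 1) / (C * (m + 2)) with ht₀def
  have hDC : D < C := by linarith
  have ht₀pos : 0 < t₀ := by positivity
  have ht₀lt : t₀ < 1 := by
    rw [ht₀def, div_lt_one (by positivity)]
    nlinarith
  set q₁ : ℝ := 1 - t₀ with hq₁def
  have hq₁pos : 0 < q₁ := by simp only [hq₁def]; linarith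
  have hq₁lt : q₁ < 1 := by simp only [hq₁def]; linarith
  have hCt₀eq : C * ((m:ℝ) + 2) * t₀ = D * ((m:ℝ) + 1) := by
    rw [ht₀def]; field_simp; try ring
  have hCt₀ : C * t₀ < D := by
    have h1 : C * t₀ * ((m:ℝ) + 2) < D * ((m:ℝ) + 2) := by
      rw [show C * t₀ * ((m:ℝ)+2) = C * ((m:ℝ)+2) * t₀ by ring, hCt₀eq]
      nlinarith
    exact lt_of_mul_lt_mul_right (by linarith [h1]) hm2.le
  -- G is below c_l on [q₁, 1)
  have hGneg : ∀ q : ℝ, q₁ ≤ q → q < 1 → G q < c_l := by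
    intro q hq hq1
    have h1q : 0 < 1 - q := by linarith
    have h1qt : 1 - q ≤ t₀ := by simp only [hq₁def] at hq; linarith
    have hfac : G q = (1 - q) ^ (m + 1) * (C * (1 - q) - D) := by
      simp only [hGdef]; ring
    have hneg : C * (1 - q) - D < 0 := by nlinarith
    have hpow : 0 < (1 - q) ^ (m + 1) := pow_pos h1q (m + 1)
    have : G q < 0 := by rw [hfac]; exact mul_neg_of_pos_of_neg hpow hneg
    linarith
  -- derivative
  have hderiv : ∀ x : ℝ, HasDerivAt G
      ((1 - x) ^ m * (D * ((m:ℝ) + 1) - C * ((m : ℝ) + 2) * (1 - x))) x := by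
    intro x
    have h1 : HasDerivAt (fun y : ℝ => 1 - y) (-1) x := by
      simpa using (hasDerivAt_id x).const_sub 1
    have h2 := (h1.pow (m + 2)).const_mul C
    have h3 := (h1.pow (m + 1)).const_mul D
    have h4 := h2.sub h3
    refine h4.congr_deriv ?_
    push_cast
    ring
  have hcontG : Continuous G := by
    simp only [hGdef]; fun_prop
  have hanti : StrictAntiOn G (Set.Icc 0 q₁) := by
    apply strictAntiOn_of_deriv_neg (convex_Icc 0 q₁) hcontG.continuousOn
    intro x hx
    rw [interior_Icc] at hx
    rw [(hderiv x).deriv]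
    have h1x : t₀ < 1 - x := by
      have := hx.2; simp only [hq₁def] at this; linarith
    have hpow : 0 < (1 - x) ^ m := pow_pos (by linarith) m
    have hlt : D * ((m:ℝ) + 1) < C * ((m : ℝ) + 2) * (1 - x) := by
      rw [← hCt₀eq]
      have : 0 < C * ((m:ℝ) + 2) := by positivity
      nlinarith
    exact mul_neg_of_pos_of_neg hpow (by linarith)
  have hG0 : G 0 = C - D := by simp only [hGdef]; ring
  have hGq₁ : G q₁ < c_l := hGneg q₁ le_rfl hq₁lt
  have hmem : c_l ∈ Set.Ioo (G q₁) (G 0) := by rw [hG0]; exact ⟨hGq₁, hA⟩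
  obtain ⟨q0, hq0mem, hq0⟩ :=
    intermediate_value_Ioo' (le_of_lt hq₁pos) hcontG.continuousOn hmem
  refine ⟨q0, ⟨⟨hq0mem.1, lt_trans hq0mem.2 hq₁lt⟩, hq0⟩, ?_⟩
  rintro y ⟨hy01, hyG⟩
  have hyle : y ≤ q₁ := by
    by_contra hgt
    push_neg at hgt
    exact absurd hyG (ne_of_lt (hGneg y (le_of_lt hgt) hy01.2))
  exact hanti.injOn ⟨le_of_lt hy01.1, hyle⟩
    ⟨le_of_lt hq0mem.1, le_of_lt hq0mem.2⟩ (by rw [hq0]; exact hyG)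

theorem h_prime_unique_root (N : ℕ) (hN : 3 ≤ N) (b p c_f c_l : ℝ)
    (hcl : 0 < c_l) (hclf : c_l < c_f) (hcfb : c_f < b) (hp : 0 < p) :
    let h' : ℝ → ℝ := fun q =>
      N * (b + p) * ((1 - q) ^ (N - 1) - q * ((N : ℝ) - 1) * (1 - q) ^ (N - 2))
        - N * c_l + N * (c_l - c_f) * (1 - q) ^ (N - 1)
    h' 1 = -(N : ℝ) * c_l ∧ -(N : ℝ) * c_l < 0 ∧
    h' 0 = (N : ℝ) * (b + p - c_f) ∧ (N : ℝ) * (b + p - c_f) > 0 ∧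
    ∃! q : ℝ, q ∈ Set.Ioo (0 : ℝ) 1 ∧ h' q = 0 := by
  obtain ⟨m, rfl⟩ : ∃ m, N = m + 3 := ⟨N - 3, by omega⟩
  intro h'
  have hNpos : (0 : ℝ) < (m + 3 : ℕ) := by positivity
  have hB : (0 : ℝ) < b + p := by linarith
  have hexp1 : m + 3 - 1 = m + 2 := by omega
  have hexp2 : m + 3 - 2 = m + 1 := by omega
  set C : ℝ := (b + p) + c_l - c_f + (b + p) * ((m:ℝ) + 2) with hCdef
  set D : ℝ := (b + p) * ((m:ℝ) + 2) with hDdef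
  have hCpos : 0 < C := by
    have : (0:ℝ) < (b+p) * ((m:ℝ)+2) := by positivity
    simp only [hCdef]; linarith
  have hDpos : 0 < D := by simp only [hDdef]; positivity
  have hCD : c_l < C - D := by simp only [hCdef, hDdef]; linarith
  have hhG : ∀ q : ℝ, h' q =
      (m + 3 : ℕ) * ((C * (1 - q) ^ (m + 2) - D * (1 - q) ^ (m + 1)) - c_l) := by
    intro q
    simp only [h', hexp1, hexp2, hCdef, hDdef]
    push_cast
    ring
  have hiff : ∀ q : ℝ, h' q = 0 ↔
      C * (1 - q) ^ (m + 2) - D * (1 - q) ^ (m + 1) = c_l := by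
    intro q
    rw [hhG q]
    constructor
    · intro h
      rcases mul_eq_zero.mp h with h | h
      · exact absurd h (ne_of_gt hNpos)
      · linarith
    · intro h; rw [h]; ring
  refine ⟨?_, ?_, ?_, ?_, ?_⟩
  · simp only [h', hexp1, hexp2]
    norm_num
    ring
  · have : (0:ℝ) < (m + 3 : ℕ) * c_l := by positivity
    push_cast at this ⊢
    linarith
  · simp only [h', hexp1, hexp2]
    norm_num
    ring
  · have : (0:ℝ) < b + p - c_f := by linarith
    positivity
  · obtain ⟨q0, ⟨hq0mem, hq0⟩, huniq⟩ :=
      G_unique_root m C D c_l hCpos hDpos hcl hCD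
    exact ⟨q0, ⟨hq0mem, (hiff q0).mpr hq0⟩,
      fun y ⟨hy01, hy⟩ => huniq y ⟨hy01, (hiff y).mp hy⟩⟩
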